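/- Fix c > 0 and let α = 1/(ce). Then for all reals n ≥ 3 and 0 < s < n − 1, log(s/(c√n)) / log((n−1)/(n−s−1)) ≤ α√n, provided s > c√n. -/

import Mathlib

theorem stmt_12 (c : ℝ) (hc : 0 < c) (n s : ℝ) (hn : 3 ≤ n) (hs0 : 0 < s)
    (hs : s < n - 1) (hsc : s > c * Real.sqrt n) :
    Real.log (s / (c * Real.sqrt n)) / Real.log ((n - 1) / (n - s - 1)) ≤
      (1 / (c * Real.exp 1)) * Real.sqrt n := by
  set r := Real.sqrt n with hrdef
  have hn0 : (0:ℝ) < n := by linarith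
  have hr : 0 < r := Real.sqrt_pos.mpr hn0
  have hr2 : r * r = n := Real.mul_self_sqrt hn0.le
  have he : (0:ℝ) < Real.exp 1 := Real.exp_pos 1
  have hns : 0 < n - s - 1 := by linarith
  have hn1 : 0 < n - 1 := by linarith
  have hD : 0 < Real.log ((n - 1) / (n - s - 1)) := by
    apply Real.log_pos
    rw [lt_div_iff₀ hns]; linarith
  rw [div_le_iff₀ hD]
  -- Step A : log(s/(c r)) ≤ s/(c * r * e)
  have hA : Real.log (s / (c * r)) ≤ s / (c * r * Real.exp 1) := by
    have hpos : 0 < s / (c * r * Real.exp 1) := by positivity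
    have h1 := Real.log_le_sub_one_of_pos hpos
    have heq : s / (c * r) = s / (c * r * Real.exp 1) * Real.exp 1 := by
      field_simp
    rw [heq, Real.log_mul (by positivity) he.ne', Real.log_exp]
    linarith
  -- Step B : s/(n-1) ≤ log((n-1)/(n-s-1))
  have hB : s / (n - 1) ≤ Real.log ((n - 1) / (n - s - 1)) := by
    have hpos : 0 < (n - s - 1) / (n - 1) := by positivity
    have h1 := Real.log_le_sub_one_of_pos hpos
    have heq : Real.log ((n - 1) / (n - s - 1)) = -Real.log ((n - s - 1) / (n - 1)) := by
      rw [← Real.log_inv]; congr 1; field_simp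
    rw [heq]
    have : (n - s - 1) / (n - 1) - 1 = -(s / (n - 1)) := by field_simp; ring
    linarith [h1.trans_eq this]
  -- Step C : chain them
  have hC : s / (c * r * Real.exp 1) ≤ 1 / (c * Real.exp 1) * r * (s / (n - 1)) := by
    rw [div_le_iff₀ (by positivity)]
    have heq : 1 / (c * Real.exp 1) * r * (s / (n - 1)) * (c * r * Real.exp 1)
        = r * r * s / (n - 1) := by
      field_simp
    rw [heq, le_div_iff₀ hn1, hr2]
    nlinarith
  calc Real.log (s / (c * r)) ≤ s / (c * r * Real.exp 1) := hA
    _ ≤ 1 / (c * Real.exp 1) * r * (s / (n - 1)) := hC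
    _ ≤ 1 / (c * Real.exp 1) * r * Real.log ((n - 1) / (n - s - 1)) := by
        apply mul_le_mul_of_nonneg_left hB (by positivity)
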